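/- Let Y be a two-dimensional real Banach space that is strictly convex but whose norm does not satisfy the parallelogram identity (i.e., Y is not a Hilbert space). Then there exists a bounded linear operator T : Y → Y which is an extreme point of the closed unit ball of L(Y) but is not an isometry. -/

import Mathlib

open Module Set MeasureTheory

lemma aux_sum_pad {ι κ M : Type*} [Fintype ι] [Fintype κ] [AddCommMonoid M]
    (φ : ι ↪ κ) (F : κ → M) (hF : ∀ j, (¬ ∃ i, φ i = j) → F j = 0) :
    ∑ j, F j = ∑ i, F (φ i) := by
  classical
  rw [← Finset.sum_map Finset.univ φ F]
  symm
  apply Finset.sum_subset (Finset.subset_univ _)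
  intro j _ hj
  exact hF j fun ⟨i, hi⟩ => hj (Finset.mem_map.2 ⟨i, Finset.mem_univ _, hi⟩)

/-- Convex hull of a compact set in a finite-dimensional normed space is compact. -/
lemma aux_isCompact_convexHull {E : Type*} [NormedAddCommGroup E] [NormedSpace ℝ E]
    [FiniteDimensional ℝ E] {s : Set E} (hs : IsCompact s) : IsCompact (convexHull ℝ s) := by
  rcases s.eq_empty_or_nonempty with rfl | ⟨p₀, hp₀⟩
  · simp
  classical
  set n := finrank ℝ E + 1 with hn
  set f : (Fin n → ℝ) × (Fin n → E) → E := fun p => ∑ i, p.1 i • p.2 i with hf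
  have hfc : Continuous f := by
    apply continuous_finset_sum
    intro i _
    exact ((continuous_apply i).comp continuous_fst).smul ((continuous_apply i).comp continuous_snd)
  have hdom : IsCompact ((stdSimplex ℝ (Fin n)) ×ˢ (Set.univ.pi fun _ : Fin n => s)) :=
    (isCompact_stdSimplex _ _).prod (isCompact_univ_pi fun _ => hs)
  have himg : f '' ((stdSimplex ℝ (Fin n)) ×ˢ (Set.univ.pi fun _ : Fin n => s))
      = convexHull ℝ s := by
    apply Subset.antisymm
    · rintro x ⟨⟨w, z⟩, ⟨⟨hw0, hw1⟩, hz⟩, rfl⟩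
      exact (convex_convexHull ℝ s).sum_mem (fun i _ => hw0 i) hw1
        (fun i _ => subset_convexHull ℝ s (hz i trivial))
    · intro x hx
      obtain ⟨ι, hfin, z, w, hzs, haff, hw0, hw1, hwz⟩ := eq_pos_convex_span_of_mem_convexHull hx
      have hcard : Fintype.card ι ≤ n := by
        calc Fintype.card ι ≤ finrank ℝ ↥(vectorSpan ℝ (Set.range z)) + 1 :=
              haff.card_le_finrank_succ
          _ ≤ n := by
              have := Submodule.finrank_le (R := ℝ) (vectorSpan ℝ (Set.range z))
              omega
      obtain ⟨φ⟩ := Function.Embedding.nonempty_iff_card_le.2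
        (le_trans hcard (le_of_eq (Fintype.card_fin n).symm))
      set w' : Fin n → ℝ := fun j => if h : ∃ i, φ i = j then w h.choose else 0 with hw'
      set z' : Fin n → E := fun j => if h : ∃ i, φ i = j then z h.choose else p₀ with hz'
      have hchoose : ∀ i : ι, (⟨i, rfl⟩ : ∃ j, φ j = φ i).choose = i := fun i =>
        φ.injective (⟨i, rfl⟩ : ∃ j, φ j = φ i).choose_spec
      have hw'phi : ∀ i : ι, w' (φ i) = w i := by
        intro i
        simp only [hw', dif_pos (⟨i, rfl⟩ : ∃ j, φ j = φ i)]
        rw [hchoose]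
      have hz'phi : ∀ i : ι, z' (φ i) = z i := by
        intro i
        simp only [hz', dif_pos (⟨i, rfl⟩ : ∃ j, φ j = φ i)]
        rw [hchoose]
      refine ⟨(w', z'), ⟨⟨fun j => ?_, ?_⟩, fun j _ => ?_⟩, ?_⟩
      · by_cases h : ∃ i, φ i = j
        · simp only [hw', dif_pos h]; exact (hw0 _).le
        · simp only [hw', dif_neg h]; exact le_refl 0
      · rw [aux_sum_pad φ w' (fun j hj => by simp only [hw', dif_neg hj])]
        rw [← hw1]
        exact Finset.sum_congr rfl fun i _ => hw'phi i
      · by_cases h : ∃ i, φ i = j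
        · simp only [hz', dif_pos h]; exact hzs ⟨_, rfl⟩
        · simp only [hz', dif_neg h]; exact hp₀
      · show ∑ j, w' j • z' j = x
        rw [aux_sum_pad φ (fun j => w' j • z' j)
          (fun j hj => by simp only [hw', dif_neg hj, zero_smul])]
        rw [← hwz]
        exact Finset.sum_congr rfl fun i _ => by rw [hw'phi, hz'phi]
  rw [← himg]
  exact hdom.image hfc

/-- In a strictly convex space, if a convex combination of vectors of norm ≤ 1 has norm 1,
then every vector with positive weight equals the combination. -/
lemma aux_extract {Y : Type*} [NormedAddCommGroup Y] [NormedSpace ℝ Y] [StrictConvexSpace ℝ Y]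
    {ι : Type*} [Fintype ι] {w : ι → ℝ} {v : ι → Y} {x : Y}
    (hw : ∀ i, 0 < w i) (hw1 : ∑ i, w i = 1) (hv : ∀ i, ‖v i‖ ≤ 1)
    (hx : ∑ i, w i • v i = x) (hxn : ‖x‖ = 1) (i : ι) : v i = x := by
  classical
  set r : Y := ∑ j ∈ Finset.univ.erase i, w j • v j with hr
  have hxsplit : x = w i • v i + r := by
    rw [hr, ← hx, ← Finset.add_sum_erase _ _ (Finset.mem_univ i)]
  have hrle : ‖r‖ ≤ 1 - w i := by
    have h1 : ‖r‖ ≤ ∑ j ∈ Finset.univ.erase i, w j * ‖v j‖ := by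
      refine (norm_sum_le _ _).trans ?_
      apply Finset.sum_le_sum
      intro j _
      rw [norm_smul, Real.norm_eq_abs, abs_of_pos (hw j)]
    have h2 : ∑ j ∈ Finset.univ.erase i, w j * ‖v j‖ ≤ ∑ j ∈ Finset.univ.erase i, w j := by
      apply Finset.sum_le_sum
      intro j _
      calc w j * ‖v j‖ ≤ w j * 1 := by
            exact mul_le_mul_of_nonneg_left (hv j) (hw j).le
        _ = w j := mul_one _
    have h3 : ∑ j ∈ Finset.univ.erase i, w j = 1 - w i := by
      have := Finset.add_sum_erase Finset.univ w (Finset.mem_univ i)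
      rw [hw1] at this
      linarith
    linarith
  have hwvi : ‖w i • v i‖ ≤ w i := by
    rw [norm_smul, Real.norm_eq_abs, abs_of_pos (hw i)]
    nlinarith [hv i, (hw i).le]
  -- equalities
  have hadd : ‖w i • v i + r‖ = 1 := by rw [← hxsplit, hxn]
  have hsum_eq : ‖w i • v i‖ + ‖r‖ = 1 := by
    have := norm_add_le (w i • v i) r
    rw [hadd] at this
    linarith
  have hnvi : ‖w i • v i‖ = w i := by
    linarith [hrle, hsum_eq, hwvi, norm_nonneg r, norm_nonneg (w i • v i)]
  have hnr : ‖r‖ = 1 - w i := by linarith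
  have hvin : ‖v i‖ = 1 := by
    rw [norm_smul, Real.norm_eq_abs, abs_of_pos (hw i)] at hnvi
    have := (hw i).ne'
    have hwine := (hw i).ne'
    field_simp at hnvi
    exact hnvi
  by_cases hri : r = 0
  · have : w i = 1 := by rw [hri, norm_zero] at hnr; linarith
    rw [hxsplit, hri, this, one_smul, add_zero]
  · have hsr : SameRay ℝ (w i • v i) r := by
      rw [sameRay_iff_norm_add]
      rw [hadd, hsum_eq]
    have hne : w i • v i ≠ 0 := by
      intro h
      rw [h, norm_zero] at hnvi
      exact (hw i).ne' hnvi.symm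
    obtain ⟨a, ha0, har⟩ := hsr.exists_nonneg_left hne
    have hxc : x = (w i * (1 + a)) • v i := by
      rw [hxsplit, ← har, smul_smul, mul_add, mul_one, add_smul, mul_comm a (w i)]
    have hcn : w i * (1 + a) = 1 := by
      have : ‖x‖ = w i * (1 + a) * ‖v i‖ := by
        rw [hxc, norm_smul, Real.norm_eq_abs, abs_of_pos (by nlinarith [hw i] : (0:ℝ) < w i * (1 + a))]
      rw [hxn, hvin, mul_one] at this
      linarith
    rw [hxc, hcn, one_smul]

/-- A norm-preserving continuous linear endomorphism of a finite-dimensional space is a unit. -/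
lemma aux_isUnit {Y : Type*} [NormedAddCommGroup Y] [NormedSpace ℝ Y] [FiniteDimensional ℝ Y]
    (U : Y →L[ℝ] Y) (hU : ∀ w, ‖U w‖ = ‖w‖) :
    ∃ u : (Y →L[ℝ] Y)ˣ, (u : Y →L[ℝ] Y) = U := by
  have hinj : Function.Injective U.toLinearMap := by
    intro a b hab
    have : ‖U (a - b)‖ = 0 := by
      rw [map_sub]
      simp only [ContinuousLinearMap.coe_coe] at hab ⊢
      rw [show U a - U b = 0 by rw [hab]; abel, norm_zero]
    rw [hU] at this
    have := norm_eq_zero.mp this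
    exact sub_eq_zero.mp this
  have hsurj : Function.Surjective U.toLinearMap :=
    (LinearMap.injective_iff_surjective).mp hinj
  let eqv : Y ≃ₗ[ℝ] Y := LinearEquiv.ofBijective U.toLinearMap ⟨hinj, hsurj⟩
  let ceqv : Y ≃L[ℝ] Y := eqv.toContinuousLinearEquiv
  have hceqv : ∀ y, ceqv y = U y := fun y => rfl
  refine ⟨⟨U, (ceqv.symm : Y →L[ℝ] Y), ?_, ?_⟩, rfl⟩
  · ext y
    simp only [ContinuousLinearMap.mul_apply, ContinuousLinearMap.coe_coe,
      ContinuousLinearMap.one_apply]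
    rw [← hceqv]
    exact ceqv.apply_symm_apply y
  · ext y
    simp only [ContinuousLinearMap.mul_apply, ContinuousLinearMap.coe_coe,
      ContinuousLinearMap.one_apply]
    rw [← hceqv]
    exact ceqv.symm_apply_apply y


set_option maxHeartbeats 1000000 in
set_option synthInstance.maxHeartbeats 1000000 in
theorem stmt_13 {Y : Type*} [NormedAddCommGroup Y] [NormedSpace ℝ Y] [CompleteSpace Y]
    (hdim : Module.finrank ℝ Y = 2) [StrictConvexSpace ℝ Y]
    (hnH : ¬ ∀ x y : Y, ‖x + y‖ ^ 2 + ‖x - y‖ ^ 2 = 2 * ‖x‖ ^ 2 + 2 * ‖y‖ ^ 2) :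
    ∃ T : Y →L[ℝ] Y,
      T ∈ Set.extremePoints ℝ (Metric.closedBall (0 : Y →L[ℝ] Y) 1) ∧
      ¬ (∀ y : Y, ‖T y‖ = ‖y‖) := by
  by_contra hcon
  push_neg at hcon
  apply hnH
  haveI hfd : FiniteDimensional ℝ Y := FiniteDimensional.of_finrank_eq_succ (n := 1) hdim
  haveI : Nontrivial Y := nontrivial_of_finrank_pos (R := ℝ) (by omega : 0 < finrank ℝ Y)
  obtain ⟨z, hz⟩ := exists_norm_eq Y zero_le_one
  classical
  set K : Set (Y →L[ℝ] Y) := {U | ∀ w, ‖U w‖ = ‖w‖} with hK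
  have hKclosed : IsClosed K := by
    have hKi : K = ⋂ w : Y, {U : Y →L[ℝ] Y | ‖U w‖ = ‖w‖} := by
      ext U; simp [hK, Set.mem_iInter]
    rw [hKi]
    refine isClosed_iInter fun w => isClosed_eq ?_ continuous_const
    exact continuous_norm.comp
      (isBoundedBilinearMap_apply.continuous.comp (continuous_id.prodMk continuous_const))
  have hKball : K ⊆ Metric.closedBall 0 1 := by
    intro U hU
    rw [Metric.mem_closedBall, dist_zero_right]
    exact U.opNorm_le_bound zero_le_one fun v => by rw [hU v, one_mul]
  have hKcomp : IsCompact K :=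
    (isCompact_closedBall (0 : Y →L[ℝ] Y) 1).of_isClosed_subset hKclosed hKball
  have hballsub : Metric.closedBall (0 : Y →L[ℝ] Y) 1 ⊆ convexHull ℝ K := by
    intro T hT
    have hKM := closure_convexHull_extremePoints
      (isCompact_closedBall (0 : Y →L[ℝ] Y) 1) (convex_closedBall _ _)
    rw [← hKM] at hT
    have h1 : closure (convexHull ℝ (Set.extremePoints ℝ (Metric.closedBall (0 : Y →L[ℝ] Y) 1)))
        ⊆ closure (convexHull ℝ K) :=
      closure_mono (convexHull_mono fun S hS => hcon S hS)
    have h2 := (aux_isCompact_convexHull hKcomp).isClosed.closure_eq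
    exact h2 ▸ h1 hT
  -- transitivity of isometries on the unit sphere
  have htrans : ∀ u u' : Y, ‖u‖ = 1 → ‖u'‖ = 1 → ∃ U ∈ K, U u = u' := by
    intro u u' hu hu'
    have hu0 : u ≠ 0 := fun h => by rw [h, norm_zero] at hu; norm_num at hu
    obtain ⟨f, hf1, hfu⟩ := exists_dual_vector ℝ u (norm_ne_zero_iff.2 hu0)
    have hfu' : f u = 1 := by rw [hfu, hu]; norm_num
    set T : Y →L[ℝ] Y := f.smulRight u' with hT
    have hTball : T ∈ Metric.closedBall (0 : Y →L[ℝ] Y) 1 := by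
      rw [Metric.mem_closedBall, dist_zero_right, hT,
        ContinuousLinearMap.norm_smulRight_apply, hf1, hu', one_mul]
    obtain ⟨ι, hfin, zz, w, hzs, haff, hw0, hw1, hwz⟩ :=
      eq_pos_convex_span_of_mem_convexHull (hballsub hTball)
    letI := hfin
    have hne : Nonempty ι := by
      by_contra hne
      rw [not_nonempty_iff] at hne
      rw [Finset.univ_eq_empty, Finset.sum_empty] at hw1
      norm_num at hw1
    obtain ⟨i⟩ := hne
    have happ : ∑ j, w j • (zz j) u = u' := by
      have hsa : (∑ j, w j • zz j) u = T u := by rw [hwz]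
      rw [ContinuousLinearMap.sum_apply] at hsa
      simp only [ContinuousLinearMap.smul_apply] at hsa
      rw [hT, ContinuousLinearMap.smulRight_apply, hfu', one_smul] at hsa
      exact hsa
    have hvle : ∀ j, ‖(zz j) u‖ ≤ 1 := fun j => by
      rw [(hzs ⟨j, rfl⟩ : zz j ∈ K) u, hu]
    exact ⟨zz i, hzs ⟨i, rfl⟩, aux_extract hw0 hw1 hvle happ hu' i⟩
  -- the group of isometric units
  set G : Subgroup (Y →L[ℝ] Y)ˣ :=
    { carrier := {g | (g : Y →L[ℝ] Y) ∈ K}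
      mul_mem' := fun {a b} ha hb y => by
        rw [Units.val_mul, ContinuousLinearMap.mul_apply, ha _, hb _]
      one_mem' := fun y => by rw [Units.val_one, ContinuousLinearMap.one_apply]
      inv_mem' := fun {a} ha y => by
        calc ‖((a⁻¹ : (Y →L[ℝ] Y)ˣ) : Y →L[ℝ] Y) y‖
            = ‖(a : Y →L[ℝ] Y) (((a⁻¹ : (Y →L[ℝ] Y)ˣ) : Y →L[ℝ] Y) y)‖ := (ha _).symm
          _ = ‖((a * a⁻¹ : (Y →L[ℝ] Y)ˣ) : Y →L[ℝ] Y) y‖ := by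
              rw [Units.val_mul, ContinuousLinearMap.mul_apply]
          _ = ‖y‖ := by rw [mul_inv_cancel, Units.val_one, ContinuousLinearMap.one_apply] }
    with hG
  have hGcomp : IsCompact (G : Set (Y →L[ℝ] Y)ˣ) := by
    rw [Units.isEmbedding_embedProduct.isCompact_iff]
    have himg : (Units.embedProduct (Y →L[ℝ] Y)) '' (G : Set (Y →L[ℝ] Y)ˣ) =
        {p : (Y →L[ℝ] Y) × (Y →L[ℝ] Y)ᵐᵒᵖ | p.1 ∈ K ∧ (MulOpposite.unop p.2) ∈ K ∧
          p.1 * (MulOpposite.unop p.2) = 1 ∧ (MulOpposite.unop p.2) * p.1 = 1} := by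
      ext p
      constructor
      · rintro ⟨g, hg, rfl⟩
        refine ⟨hg, G.inv_mem hg, ?_, ?_⟩
        · show (g : Y →L[ℝ] Y) * ((g⁻¹ : (Y →L[ℝ] Y)ˣ) : Y →L[ℝ] Y) = 1
          rw [← Units.val_mul, mul_inv_cancel, Units.val_one]
        · show ((g⁻¹ : (Y →L[ℝ] Y)ˣ) : Y →L[ℝ] Y) * (g : Y →L[ℝ] Y) = 1
          rw [← Units.val_mul, inv_mul_cancel, Units.val_one]
      · rintro ⟨h1, h2, h3, h4⟩
        refine ⟨⟨p.1, MulOpposite.unop p.2, h3, h4⟩, h1, ?_⟩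
        show (_, MulOpposite.op (MulOpposite.unop p.2)) = p
        rw [MulOpposite.op_unop]
    rw [himg]
    have hsub : {p : (Y →L[ℝ] Y) × (Y →L[ℝ] Y)ᵐᵒᵖ | p.1 ∈ K ∧ (MulOpposite.unop p.2) ∈ K ∧
          p.1 * (MulOpposite.unop p.2) = 1 ∧ (MulOpposite.unop p.2) * p.1 = 1}
        ⊆ K ×ˢ (MulOpposite.op '' K) := by
      rintro p ⟨h1, h2, -, -⟩
      exact ⟨h1, MulOpposite.unop p.2, h2, MulOpposite.op_unop _⟩
    have hclosed : IsClosed {p : (Y →L[ℝ] Y) × (Y →L[ℝ] Y)ᵐᵒᵖ | p.1 ∈ K ∧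
          (MulOpposite.unop p.2) ∈ K ∧
          p.1 * (MulOpposite.unop p.2) = 1 ∧ (MulOpposite.unop p.2) * p.1 = 1} := by
      have e1 : IsClosed {p : (Y →L[ℝ] Y) × (Y →L[ℝ] Y)ᵐᵒᵖ | p.1 ∈ K} :=
        hKclosed.preimage continuous_fst
      have e2 : IsClosed {p : (Y →L[ℝ] Y) × (Y →L[ℝ] Y)ᵐᵒᵖ | MulOpposite.unop p.2 ∈ K} :=
        hKclosed.preimage (MulOpposite.continuous_unop.comp continuous_snd)
      have e3 : IsClosed {p : (Y →L[ℝ] Y) × (Y →L[ℝ] Y)ᵐᵒᵖ |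
          p.1 * (MulOpposite.unop p.2) = 1} :=
        isClosed_eq (continuous_fst.mul (MulOpposite.continuous_unop.comp continuous_snd))
          continuous_const
      have e4 : IsClosed {p : (Y →L[ℝ] Y) × (Y →L[ℝ] Y)ᵐᵒᵖ |
          (MulOpposite.unop p.2) * p.1 = 1} :=
        isClosed_eq ((MulOpposite.continuous_unop.comp continuous_snd).mul continuous_fst)
          continuous_const
      have : {p : (Y →L[ℝ] Y) × (Y →L[ℝ] Y)ᵐᵒᵖ | p.1 ∈ K ∧
          (MulOpposite.unop p.2) ∈ K ∧
          p.1 * (MulOpposite.unop p.2) = 1 ∧ (MulOpposite.unop p.2) * p.1 = 1} =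
          ({p : (Y →L[ℝ] Y) × (Y →L[ℝ] Y)ᵐᵒᵖ | p.1 ∈ K} ∩
           {p : (Y →L[ℝ] Y) × (Y →L[ℝ] Y)ᵐᵒᵖ | MulOpposite.unop p.2 ∈ K}) ∩
          ({p : (Y →L[ℝ] Y) × (Y →L[ℝ] Y)ᵐᵒᵖ | p.1 * (MulOpposite.unop p.2) = 1} ∩
           {p : (Y →L[ℝ] Y) × (Y →L[ℝ] Y)ᵐᵒᵖ | (MulOpposite.unop p.2) * p.1 = 1}) := by
        ext p
        simp only [Set.mem_setOf_eq, Set.mem_inter_iff]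
        tauto
      rw [this]
      exact (e1.inter e2).inter (e3.inter e4)
    exact (hKcomp.prod (hKcomp.image MulOpposite.continuous_op)).of_isClosed_subset
      hclosed hsub
  haveI hGcs : CompactSpace ↥G := isCompact_iff_compactSpace.mp hGcomp
  haveI : WeaklyLocallyCompactSpace ↥G :=
    ⟨fun _ => ⟨Set.univ, isCompact_univ, Filter.univ_mem⟩⟩
  haveI hGne : Nonempty ↥G := ⟨1⟩
  letI : MeasurableSpace ↥G := borel _
  haveI : BorelSpace ↥G := ⟨rfl⟩
  set K₀ : TopologicalSpace.PositiveCompacts ↥G :=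
    ⟨⟨Set.univ, isCompact_univ⟩, by simp [interior_univ]⟩ with hK₀
  set μ := MeasureTheory.Measure.haarMeasure K₀ with hμ
  haveI : μ.IsMulLeftInvariant := MeasureTheory.Measure.isMulLeftInvariant_haarMeasure K₀
  have hμuniv : μ Set.univ = 1 := by
    have := MeasureTheory.Measure.haarMeasure_self (K₀ := K₀)
    simpa [hμ, hK₀] using this
  haveI : IsFiniteMeasure μ := ⟨by rw [hμuniv]; exact ENNReal.one_lt_top⟩
  -- the action and the averaged bilinear form
  set A : ↥G → (Y →L[ℝ] Y) := fun g => ((g : (Y →L[ℝ] Y)ˣ) : Y →L[ℝ] Y) with hA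
  have hA_isom : ∀ (g : ↥G) (y : Y), ‖A g y‖ = ‖y‖ := fun g => g.2
  have hAmul : ∀ (g h : ↥G) (y : Y), A (g * h) y = A g (A h y) := fun g h y => by
    simp only [hA, Subgroup.coe_mul, Units.val_mul, ContinuousLinearMap.mul_apply]
  have hAcont : Continuous A := Units.continuous_val.comp continuous_subtype_val
  have hAapp : ∀ x : Y, Continuous fun g : ↥G => A g x := fun x =>
    isBoundedBilinearMap_apply.continuous.comp (hAcont.prodMk continuous_const)
  set F : ↥G → Y → Y := fun g x => A g⁻¹ x with hF
  have hF_isom : ∀ (g : ↥G) (y : Y), ‖F g y‖ = ‖y‖ := fun g y => hA_isom g⁻¹ y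
  set ip : Y → Y → ℝ := fun a b => inner ℝ (toEuclidean (E := Y) a) (toEuclidean (E := Y) b)
    with hip
  have hipcont : Continuous fun p : Y × Y => ip p.1 p.2 :=
    Continuous.inner (toEuclidean.continuous.comp continuous_fst)
      (toEuclidean.continuous.comp continuous_snd)
  set B : Y → Y → ℝ := fun a b => ∫ g : ↥G, ip (F g a) (F g b) ∂μ with hB
  have hFcont : ∀ a : Y, Continuous fun g : ↥G => F g a := fun a =>
    (hAapp a).comp continuous_inv
  have hint : ∀ a b : Y, Integrable (fun g : ↥G => ip (F g a) (F g b)) μ := fun a b =>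
    (hipcont.comp ((hFcont a).prodMk (hFcont b))).integrable_of_hasCompactSupport
      (HasCompactSupport.of_compactSpace _)
  -- invariance of B under the action
  have hBinv : ∀ (h : ↥G) (a b : Y), B (A h a) (A h b) = B a b := by
    intro h a b
    have hkey : ∀ (g : ↥G) (cc : Y), F g (A h cc) = F (h⁻¹ * g) cc := by
      intro g cc
      show A g⁻¹ (A h cc) = A (h⁻¹ * g)⁻¹ cc
      have hgr : g⁻¹ * h = (h⁻¹ * g)⁻¹ := by rw [mul_inv_rev, inv_inv]
      rw [← hAmul, hgr]
    have hptinv : ∀ g : ↥G,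
        ip (F g (A h a)) (F g (A h b)) = ip (F (h⁻¹ * g) a) (F (h⁻¹ * g) b) := fun g => by
      rw [hkey g a, hkey g b]
    show (∫ g : ↥G, ip (F g (A h a)) (F g (A h b)) ∂μ) = ∫ g : ↥G, ip (F g a) (F g b) ∂μ
    calc (∫ g : ↥G, ip (F g (A h a)) (F g (A h b)) ∂μ)
        = ∫ g : ↥G, ip (F (h⁻¹ * g) a) (F (h⁻¹ * g) b) ∂μ :=
          MeasureTheory.integral_congr_ae (Filter.Eventually.of_forall hptinv)
      _ = ∫ g : ↥G, ip (F g a) (F g b) ∂μ :=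
          MeasureTheory.integral_mul_left_eq_self (fun g : ↥G => ip (F g a) (F g b)) h⁻¹
  -- B is constant on the unit sphere
  have hBconst : ∀ u : Y, ‖u‖ = 1 → B u u = B z z := by
    intro u hu
    obtain ⟨U, hUK, hUz⟩ := htrans z u hz hu
    obtain ⟨v, hv⟩ := aux_isUnit U hUK
    have hvG : v ∈ G := by
      show (v : Y →L[ℝ] Y) ∈ K
      rw [hv]; exact hUK
    have hAv : A ⟨v, hvG⟩ z = u := by
      show ((v : (Y →L[ℝ] Y)ˣ) : Y →L[ℝ] Y) z = u
      rw [hv]; exact hUz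
    rw [← hAv, hBinv]
  -- positivity of B on the sphere
  have hsphere_pos : ∃ δ : ℝ, 0 < δ ∧ ∀ w : Y, ‖w‖ = 1 → δ ≤ ip w w := by
    have hscomp : IsCompact (Metric.sphere (0 : Y) 1) := isCompact_sphere _ _
    have hsne : (Metric.sphere (0 : Y) 1).Nonempty := ⟨z, by simp [hz]⟩
    have hcont2 : Continuous fun w : Y => ip w w :=
      hipcont.comp (continuous_id.prodMk continuous_id)
    obtain ⟨w₀, hw₀mem, hw₀min⟩ := hscomp.exists_isMinOn hsne hcont2.continuousOn
    have hw₀n : ‖w₀‖ = 1 := by simpa using hw₀mem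
    have hw₀0 : w₀ ≠ 0 := fun h0 => by rw [h0, norm_zero] at hw₀n; norm_num at hw₀n
    have hE0 : toEuclidean (E := Y) w₀ ≠ 0 := fun h =>
      hw₀0 (by simpa using congrArg (toEuclidean (E := Y)).symm h)
    refine ⟨ip w₀ w₀, ?_, fun w hw => hw₀min (by simp [hw] : w ∈ Metric.sphere (0 : Y) 1)⟩
    have : ip w₀ w₀ = ‖toEuclidean (E := Y) w₀‖ ^ 2 := real_inner_self_eq_norm_sq _
    rw [this]
    exact pow_pos (norm_pos_iff.2 hE0) 2
  obtain ⟨δ, hδ, hδle⟩ := hsphere_pos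
  set c : ℝ := B z z with hc_def
  have hc : 0 < c := by
    have h1 : ∀ g : ↥G, δ ≤ ip (F g z) (F g z) := fun g => hδle _ (by rw [hF_isom g z, hz])
    have h2 : (∫ _g : ↥G, δ ∂μ) ≤ ∫ g : ↥G, ip (F g z) (F g z) ∂μ :=
      MeasureTheory.integral_mono (MeasureTheory.integrable_const δ) (hint z z) h1
    have h3 : (∫ _g : ↥G, δ ∂μ) = δ := by
      rw [MeasureTheory.integral_const, MeasureTheory.measureReal_def, hμuniv]
      simp
    rw [h3] at h2
    calc (0 : ℝ) < δ := hδ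
      _ ≤ B z z := h2
  -- homogeneity
  have hBnorm : ∀ a : Y, B a a = c * ‖a‖ ^ 2 := by
    intro a
    rcases eq_or_ne a 0 with rfl | ha
    · have : ∀ g : ↥G, ip (F g 0) (F g 0) = 0 := fun g => by
        have h0 : F g (0 : Y) = 0 := map_zero (A g⁻¹)
        rw [h0, hip]
        simp
      show (∫ g : ↥G, ip (F g 0) (F g 0) ∂μ) = c * ‖(0 : Y)‖ ^ 2
      rw [MeasureTheory.integral_congr_ae (Filter.Eventually.of_forall this)]
      simp
    · have hna : ‖a‖ ≠ 0 := norm_ne_zero_iff.2 ha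
      set u : Y := ‖a‖⁻¹ • a with hu
      have hun : ‖u‖ = 1 := by
        rw [hu, norm_smul, Real.norm_eq_abs, abs_of_pos (by positivity : (0:ℝ) < ‖a‖⁻¹)]
        field_simp
      have hau : a = ‖a‖ • u := by
        rw [hu, smul_smul]
        rw [mul_inv_cancel₀ hna, one_smul]
      have hpt : ∀ g : ↥G, ip (F g a) (F g a) = ‖a‖ ^ 2 * ip (F g u) (F g u) := by
        intro g
        conv_lhs => rw [hau]
        have hsm : F g (‖a‖ • u) = ‖a‖ • F g u := (A g⁻¹).map_smul _ _
        rw [hsm, hip]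
        simp only [_root_.map_smul]
        rw [real_inner_smul_left, real_inner_smul_right]
        ring
      have : B a a = ∫ g : ↥G, ‖a‖ ^ 2 * ip (F g u) (F g u) ∂μ := by
        rw [hB]
        exact MeasureTheory.integral_congr_ae (Filter.Eventually.of_forall hpt)
      rw [this, MeasureTheory.integral_const_mul]
      have huB : (∫ g : ↥G, ip (F g u) (F g u) ∂μ) = B u u := rfl
      rw [huB, hBconst u hun]
      ring
  -- the parallelogram law
  intro x y
  have key : B (x + y) (x + y) + B (x - y) (x - y) = 2 * B x x + 2 * B y y := by
    have hpt : ∀ g : ↥G,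
        ip (F g (x + y)) (F g (x + y)) + ip (F g (x - y)) (F g (x - y)) =
          2 * ip (F g x) (F g x) + 2 * ip (F g y) (F g y) := by
      intro g
      have h1 : F g (x + y) = F g x + F g y := map_add (A g⁻¹) _ _
      have h2 : F g (x - y) = F g x - F g y := map_sub (A g⁻¹) _ _
      rw [h1, h2, hip]
      simp only [map_add, map_sub]
      have hpl := parallelogram_law (𝕜 := ℝ)
        (x := toEuclidean (E := Y) (F g x)) (y := toEuclidean (E := Y) (F g y))
      rw [hpl]
      ring
    have e1 : B (x + y) (x + y) + B (x - y) (x - y) =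
        ∫ g : ↥G, (ip (F g (x + y)) (F g (x + y)) + ip (F g (x - y)) (F g (x - y))) ∂μ :=
      (MeasureTheory.integral_add (hint _ _) (hint _ _)).symm
    have e2 : (∫ g : ↥G, (ip (F g (x + y)) (F g (x + y)) + ip (F g (x - y)) (F g (x - y))) ∂μ)
        = ∫ g : ↥G, (2 * ip (F g x) (F g x) + 2 * ip (F g y) (F g y)) ∂μ :=
      MeasureTheory.integral_congr_ae (Filter.Eventually.of_forall hpt)
    have e3 : (∫ g : ↥G, (2 * ip (F g x) (F g x) + 2 * ip (F g y) (F g y)) ∂μ)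
        = 2 * B x x + 2 * B y y := by
      rw [MeasureTheory.integral_add ((hint x x).const_mul 2) ((hint y y).const_mul 2),
        MeasureTheory.integral_const_mul, MeasureTheory.integral_const_mul]
    rw [e1, e2, e3]
  rw [hBnorm, hBnorm, hBnorm, hBnorm] at key
  have h2 : c * (‖x + y‖ ^ 2 + ‖x - y‖ ^ 2) = c * ‖x + y‖ ^ 2 + c * ‖x - y‖ ^ 2 := by ring
  have h3 : c * (2 * ‖x‖ ^ 2 + 2 * ‖y‖ ^ 2) = 2 * (c * ‖x‖ ^ 2) + 2 * (c * ‖y‖ ^ 2) := by ring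
  refine mul_left_cancel₀ hc.ne' ?_
  rw [h2, h3]
  linarith [key]
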